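/- Let r, t, e be positive integers. If r > te, then there is no pure O-sequence of codimension r, socle degree e and type t. Moreover this bound is sharp: for r = te there is exactly one pure O-sequence of codimension te, socle degree e and type t. -/

import Mathlib

/-- The degree of a monomial, given by its exponent vector. -/
def monDeg {r : ℕ} (M : Fin r → ℕ) : ℕ := ∑ j, M j

/-- `X` is a (monomial) order ideal: a nonempty finite set of monomials (exponent vectors)
closed under divisibility. -/
def IsOrderIdeal {r : ℕ} (X : Finset (Fin r → ℕ)) : Prop :=
  X.Nonempty ∧ ∀ M ∈ X, ∀ N : Fin r → ℕ, (∀ j, N j ≤ M j) → N ∈ X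

/-- `M` is a maximal monomial of `X` with respect to divisibility. -/
def IsMaxMon {r : ℕ} (X : Finset (Fin r → ℕ)) (M : Fin r → ℕ) : Prop :=
  M ∈ X ∧ ∀ N ∈ X, (∀ j, M j ≤ N j) → N = M

/-- `X` is a pure order ideal with socle degree `e`: it is an order ideal whose maximal
degree is `e` and all of whose maximal monomials have degree `e`. -/
def IsPureWithSocle {r : ℕ} (X : Finset (Fin r → ℕ)) (e : ℕ) : Prop :=
  IsOrderIdeal X ∧ (∀ M ∈ X, monDeg M ≤ e) ∧ (∃ M ∈ X, monDeg M = e) ∧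
    ∀ M, IsMaxMon X M → monDeg M = e

/-- `h` agrees in degrees `≤ e` with the h-vector of `X`. -/
def HasHVector {r : ℕ} (X : Finset (Fin r → ℕ)) (h : ℕ → ℕ) (e : ℕ) : Prop :=
  ∀ i ≤ e, h i = (X.filter fun M => monDeg M = i).card

/-- `h` is (in degrees `≤ e`) a pure O-sequence of socle degree `e`. -/
def IsPureOSeq (h : ℕ → ℕ) (e : ℕ) : Prop :=
  ∃ (r : ℕ) (X : Finset (Fin r → ℕ)), IsPureWithSocle X e ∧ HasHVector X h e

/-- `h` is a pure O-sequence of socle degree `e` and type `t`. -/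
def IsPureOSeqOfType (h : ℕ → ℕ) (e t : ℕ) : Prop :=
  ∃ (r : ℕ) (X : Finset (Fin r → ℕ)), IsPureWithSocle X e ∧ HasHVector X h e ∧
    {M : Fin r → ℕ | IsMaxMon X M}.ncard = t

/-- `((n)_(d))_1^1`, computed from the `d`-binomial (Macaulay) expansion of `n`
obtained greedily; by convention `((0)_(d))_1^1 = 0`. -/
def macaulayBound : ℕ → ℕ → ℕ
  | 0, _ => 0
  | (n+1), d =>
      Nat.choose (Nat.findGreatest (fun k => Nat.choose k d ≤ n + 1) (n + 1 + d) + 1) (d + 1) +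
        macaulayBound
          ((n + 1) - Nat.choose (Nat.findGreatest (fun k => Nat.choose k d ≤ n + 1) (n + 1 + d)) d)
          (d - 1)
  termination_by n d => n
  decreasing_by
    have hd : d ≤ Nat.findGreatest (fun k => Nat.choose k d ≤ n + 1) (n + 1 + d) :=
      Nat.le_findGreatest (by omega) (by simp [Nat.choose_self])
    have hpos := Nat.choose_pos hd
    omega

/-- `g` satisfies Macaulay's bound (in degrees `1 ≤ i ≤ e - 1`). -/
def SatisfiesMacaulay (g : ℕ → ℕ) (e : ℕ) : Prop :=
  ∀ i, 1 ≤ i → i + 1 ≤ e → g (i + 1) ≤ macaulayBound (g i) i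

/-- `h` is an O-sequence of socle degree `e`. -/
def IsOSeq (h : ℕ → ℕ) (e : ℕ) : Prop :=
  h 0 = 1 ∧ (∀ i ≤ e, 0 < h i) ∧ SatisfiesMacaulay h e

/-- `h` is differentiable: its first difference `(1, h 1 - h 0, …, h e - h (e-1))`
consists of nonnegative integers and satisfies Macaulay's bound. -/
def IsDifferentiable (h : ℕ → ℕ) (e : ℕ) : Prop :=
  h 0 = 1 ∧ (∀ i, 1 ≤ i → i ≤ e → h (i - 1) ≤ h i) ∧
    SatisfiesMacaulay (fun i => if i = 0 then 1 else h i - h (i - 1)) e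

-- auxiliary defs
def PP.supp {r : ℕ} (M : Fin r → ℕ) : Finset (Fin r) := Finset.univ.filter (fun j => M j ≠ 0)

open scoped Classical in
noncomputable def PP.maxSet {r : ℕ} (X : Finset (Fin r → ℕ)) : Finset (Fin r → ℕ) :=
  X.filter (fun M => IsMaxMon X M)

def PP.unit {r : ℕ} (j : Fin r) : Fin r → ℕ := fun k => if k = j then 1 else 0

def PP.ind {r : ℕ} (A : Finset (Fin r)) : Fin r → ℕ := fun j => if j ∈ A then 1 else 0

namespace PP

lemma mem_maxSet {r : ℕ} {X : Finset (Fin r → ℕ)} {M : Fin r → ℕ} :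
    M ∈ maxSet X ↔ IsMaxMon X M := by
  classical
  simp only [maxSet, Finset.mem_filter]
  exact ⟨fun h => h.2, fun h => ⟨h.1, h⟩⟩

lemma deg_lt {r : ℕ} {N M : Fin r → ℕ} (h : ∀ j, N j ≤ M j) (hne : N ≠ M) :
    monDeg N < monDeg M := by
  apply Finset.sum_lt_sum (fun j _ => h j)
  by_contra hc
  push_neg at hc
  exact hne (funext fun j => le_antisymm (h j) (hc j (Finset.mem_univ j)))

lemma exists_max_above {r : ℕ} {X : Finset (Fin r → ℕ)} (hX : IsOrderIdeal X)
    {M : Fin r → ℕ} (hM : M ∈ X) : ∃ M' ∈ maxSet X, ∀ j, M j ≤ M' j := by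
  classical
  set Y := X.filter (fun N => ∀ j, M j ≤ N j) with hY
  have hMY : M ∈ Y := by simp [hY, hM]
  obtain ⟨N, hNY, hmax⟩ := Y.exists_max_image monDeg ⟨M, hMY⟩
  simp only [hY, Finset.mem_filter] at hNY
  refine ⟨N, mem_maxSet.2 ⟨hNY.1, fun N' hN' hle => ?_⟩, hNY.2⟩
  by_contra hne
  have hN'Y : N' ∈ Y := by
    simp only [hY, Finset.mem_filter]
    exact ⟨hN', fun j => le_trans (hNY.2 j) (hle j)⟩
  exact absurd (hmax N' hN'Y) (not_le.2 (deg_lt hle (Ne.symm hne)))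

lemma card_supp_le {r : ℕ} (M : Fin r → ℕ) : (supp M).card ≤ monDeg M := by
  rw [Finset.card_eq_sum_ones]
  calc ∑ _j ∈ supp M, 1 ≤ ∑ j ∈ supp M, M j := by
        apply Finset.sum_le_sum
        intro j hj
        simp only [supp, Finset.mem_filter] at hj
        omega
    _ ≤ monDeg M := Finset.sum_le_sum_of_subset (Finset.filter_subset _ _)

lemma monDeg_unit {r : ℕ} (j : Fin r) : monDeg (unit j) = 1 := by
  simp [monDeg, unit]

lemma eq_unit_of_deg_one {r : ℕ} {N : Fin r → ℕ} (h : monDeg N = 1) :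
    ∃ j, N = unit j := by
  classical
  have hne : ∃ j, N j ≠ 0 := by
    by_contra hc
    push_neg at hc
    simp [monDeg, hc] at h
  obtain ⟨j, hj⟩ := hne
  have hsplit : N j + ∑ k ∈ Finset.univ.erase j, N k = monDeg N :=
    Finset.add_sum_erase _ _ (Finset.mem_univ j)
  have hz : ∀ k ∈ Finset.univ.erase j, N k = 0 := by
    rw [h] at hsplit
    intro k hk
    have := Finset.single_le_sum (fun x _ => Nat.zero_le (N x)) hk
    omega
  refine ⟨j, funext fun k => ?_⟩
  by_cases hkj : k = j
  · subst hkj; simp only [unit, if_pos]; rw [h] at hsplit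
    have : ∑ k ∈ Finset.univ.erase k, N k = 0 := Finset.sum_eq_zero hz
    omega
  · simp only [unit, if_neg hkj]
    exact hz k (Finset.mem_erase.2 ⟨hkj, Finset.mem_univ k⟩)

lemma unit_injective {r : ℕ} : Function.Injective (unit (r := r)) := by
  intro j j' h
  by_contra hne
  have := congrFun h j
  simp [unit, hne] at this

lemma deg_one_eq {r : ℕ} {X : Finset (Fin r → ℕ)} (hX : IsOrderIdeal X) :
    X.filter (fun M => monDeg M = 1) = ((maxSet X).biUnion supp).image unit := by
  ext N
  simp only [Finset.mem_filter, Finset.mem_image, Finset.mem_biUnion]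
  constructor
  · rintro ⟨hNX, hdeg⟩
    obtain ⟨j, rfl⟩ := eq_unit_of_deg_one hdeg
    obtain ⟨M', hM', hle⟩ := exists_max_above hX hNX
    refine ⟨j, ⟨M', hM', ?_⟩, rfl⟩
    simp only [supp, Finset.mem_filter, Finset.mem_univ, true_and]
    have := hle j
    simp only [unit, if_pos] at this
    omega
  · rintro ⟨j, ⟨M, hM, hj⟩, rfl⟩
    simp only [supp, Finset.mem_filter] at hj
    have hMX : M ∈ X := (mem_maxSet.1 hM).1
    refine ⟨hX.2 M hMX (unit j) fun k => ?_, monDeg_unit j⟩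
    by_cases hkj : k = j
    · subst hkj; simp only [unit, if_pos]; omega
    · simp [unit, hkj]

lemma card_deg_one {r : ℕ} {X : Finset (Fin r → ℕ)} (hX : IsOrderIdeal X) :
    (X.filter (fun M => monDeg M = 1)).card = ((maxSet X).biUnion supp).card := by
  rw [deg_one_eq hX, Finset.card_image_of_injective _ unit_injective]

end PP

namespace PP

lemma ind_injective {r : ℕ} : Function.Injective (ind (r := r)) := by
  intro A B h
  ext j
  have := congrFun h j
  simp only [ind] at this
  constructor
  · intro hA
    by_contra hB
    simp [hA, hB] at this
  · intro hB
    by_contra hA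
    simp [hA, hB] at this

lemma monDeg_ind {r : ℕ} (A : Finset (Fin r)) : monDeg (ind A) = A.card := by
  simp [monDeg, ind, Finset.sum_ite_mem]

lemma supp_ind {r : ℕ} (A : Finset (Fin r)) : supp (ind A) = A := by
  ext j; simp [supp, ind]

theorem count_eq {r e t : ℕ} {X : Finset (Fin r → ℕ)} (hX : IsPureWithSocle X e)
    (hS : (maxSet X).card = t) (het : 0 < e) (htt : 0 < t)
    (h1 : (X.filter (fun M => monDeg M = 1)).card = t * e) :
    ∀ i, 1 ≤ i → i ≤ e → (X.filter (fun M => monDeg M = i)).card = t * Nat.choose e i := by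
  classical
  obtain ⟨hOI, hle, -, hpure⟩ := hX
  have hdeg : ∀ M ∈ maxSet X, monDeg M = e := fun M hM => hpure M (mem_maxSet.1 hM)
  have hsupple : ∀ M ∈ maxSet X, (supp M).card ≤ e := fun M hM =>
    (card_supp_le M).trans_eq (hdeg M hM)
  have hcard1 : ((maxSet X).biUnion supp).card = t * e := by
    rw [← card_deg_one hOI, h1]
  have hsum_le : ∑ M ∈ maxSet X, (supp M).card ≤ t * e := by
    calc ∑ M ∈ maxSet X, (supp M).card ≤ ∑ _M ∈ maxSet X, e :=
          Finset.sum_le_sum hsupple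
      _ = t * e := by rw [Finset.sum_const, hS, smul_eq_mul]
  have hsum_ge : t * e ≤ ∑ M ∈ maxSet X, (supp M).card := by
    rw [← hcard1]; exact Finset.card_biUnion_le
  -- each support has exactly e elements
  have hsupp_card : ∀ M ∈ maxSet X, (supp M).card = e := by
    intro M hM
    by_contra hne
    have hlt : (supp M).card < e := lt_of_le_of_ne (hsupple M hM) hne
    have : ∑ M ∈ maxSet X, (supp M).card < ∑ _M ∈ maxSet X, e :=
      Finset.sum_lt_sum hsupple ⟨M, hM, hlt⟩
    rw [Finset.sum_const, hS, smul_eq_mul] at this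
    omega
  -- squarefree
  have hsq : ∀ M ∈ maxSet X, ∀ j, M j ≤ 1 := by
    intro M hM j
    by_cases hj : j ∈ supp M
    · by_contra hgt
      have h2 : ∀ k ∈ supp M, 1 ≤ M k := by
        intro k hk
        simp only [supp, Finset.mem_filter] at hk
        omega
      have : ∑ _k ∈ supp M, 1 < ∑ k ∈ supp M, M k :=
        Finset.sum_lt_sum h2 ⟨j, hj, by omega⟩
      have hsub : ∑ k ∈ supp M, M k ≤ monDeg M :=
        Finset.sum_le_sum_of_subset (Finset.filter_subset _ _)
      rw [Finset.sum_const, smul_eq_mul, mul_one] at this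
      have := hsupp_card M hM
      have := hdeg M hM
      omega
    · simp only [supp, Finset.mem_filter, Finset.mem_univ, true_and, not_not] at hj
      omega
  -- disjoint supports
  have hdisj : ∀ M ∈ maxSet X, ∀ M' ∈ maxSet X, M ≠ M' → Disjoint (supp M) (supp M') := by
    intro M hM M' hM' hne
    rw [Finset.disjoint_left]
    intro j hjM hjM'
    set A := ((maxSet X).erase M).biUnion supp with hA
    have hjA : j ∈ A := Finset.mem_biUnion.2 ⟨M', Finset.mem_erase.2 ⟨Ne.symm hne, hM'⟩, hjM'⟩
    have hunion : (maxSet X).biUnion supp = supp M ∪ A := by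
      conv_lhs => rw [← Finset.insert_erase hM]
      rw [Finset.biUnion_insert]
    have hsubU : (maxSet X).biUnion supp ⊆ (supp M).erase j ∪ A := by
      rw [hunion]
      intro x hx
      rcases Finset.mem_union.1 hx with hx | hx
      · by_cases hxj : x = j
        · exact Finset.mem_union_right _ (hxj ▸ hjA)
        · exact Finset.mem_union_left _ (Finset.mem_erase.2 ⟨hxj, hx⟩)
      · exact Finset.mem_union_right _ hx
    have hcardle : ((maxSet X).biUnion supp).card ≤ (e - 1) + (t - 1) * e := by
      calc ((maxSet X).biUnion supp).card ≤ ((supp M).erase j ∪ A).card :=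
            Finset.card_le_card hsubU
        _ ≤ ((supp M).erase j).card + A.card := Finset.card_union_le _ _
        _ ≤ (e - 1) + (t - 1) * e := by
            apply Nat.add_le_add
            · rw [Finset.card_erase_of_mem hjM, hsupp_card M hM]
            · calc A.card ≤ ∑ N ∈ (maxSet X).erase M, (supp N).card :=
                    Finset.card_biUnion_le
                _ ≤ ∑ _N ∈ (maxSet X).erase M, e := Finset.sum_le_sum
                    (fun N hN => hsupple N (Finset.mem_of_mem_erase hN))
                _ = (t - 1) * e := by
                    rw [Finset.sum_const, Finset.card_erase_of_mem hM, hS, smul_eq_mul]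
    rw [hcard1] at hcardle
    obtain ⟨t', rfl⟩ : ∃ t', t = t' + 1 := ⟨t - 1, by omega⟩
    rw [Nat.succ_mul] at hcardle
    simp only [Nat.add_sub_cancel] at hcardle
    omega
  -- the structure of degree-i pieces
  intro i hi1 hie
  have hXi : X.filter (fun M => monDeg M = i) =
      (maxSet X).biUnion (fun M => ((supp M).powersetCard i).image ind) := by
    ext N
    simp only [Finset.mem_filter, Finset.mem_biUnion, Finset.mem_image,
      Finset.mem_powersetCard]
    constructor
    · rintro ⟨hNX, hdegN⟩
      obtain ⟨M', hM', hleN⟩ := exists_max_above hOI hNX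
      have hNsq : ∀ j, N j ≤ 1 := fun j => (hleN j).trans (hsq M' hM' j)
      have hNind : N = ind (supp N) := by
        funext j
        by_cases hj : N j = 0
        · simp [ind, supp, hj]
        · have := hNsq j
          have hj1 : N j = 1 := by omega
          simp [ind, supp, hj, hj1]
      have hsuppN : supp N ⊆ supp M' := by
        intro j hj
        simp only [supp, Finset.mem_filter, Finset.mem_univ, true_and] at hj ⊢
        have := hleN j
        omega
      have hcardN : (supp N).card = i := by
        have : monDeg N = (supp N).card := by
          rw [hNind, monDeg_ind, supp_ind]
        omega
      exact ⟨M', hM', supp N, ⟨hsuppN, hcardN⟩, hNind.symm⟩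
    · rintro ⟨M, hM, A, ⟨hAsub, hAcard⟩, rfl⟩
      have hMX : M ∈ X := (mem_maxSet.1 hM).1
      refine ⟨hOI.2 M hMX (ind A) fun j => ?_, by rw [monDeg_ind, hAcard]⟩
      by_cases hj : j ∈ A
      · have hjs : j ∈ supp M := hAsub hj
        simp only [supp, Finset.mem_filter, Finset.mem_univ, true_and] at hjs
        simp only [ind, if_pos hj]
        omega
      · simp [ind, hj]
  rw [hXi, Finset.card_biUnion, ← hS, Finset.card_eq_sum_ones (maxSet X),
    Finset.sum_mul, one_mul]
  · apply Finset.sum_congr rfl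
    intro M hM
    rw [Finset.card_image_of_injective _ ind_injective, Finset.card_powersetCard,
      hsupp_card M hM]
  · intro M hM M' hM' hne
    rw [Function.onFun, Finset.disjoint_left]
    rintro N hN hN'
    simp only [Finset.mem_image, Finset.mem_powersetCard] at hN hN'
    obtain ⟨A, ⟨hA, hAc⟩, rfl⟩ := hN
    obtain ⟨A', ⟨hA', hAc'⟩, hAA⟩ := hN'
    have heq : A' = A := ind_injective hAA
    rw [heq] at hA'
    have hdis := hdisj M hM M' hM' hne
    obtain ⟨j, hj⟩ := Finset.card_pos.1 (show 0 < A.card by omega)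
    exact (Finset.disjoint_left.1 hdis (hA hj)) (hA' hj)

lemma deg_zero_eq {r : ℕ} {X : Finset (Fin r → ℕ)} (hX : IsOrderIdeal X) :
    X.filter (fun M => monDeg M = 0) = {fun _ => 0} := by
  ext N
  simp only [Finset.mem_filter, Finset.mem_singleton]
  constructor
  · rintro ⟨hNX, hdeg⟩
    funext j
    have := Finset.single_le_sum (fun x _ => Nat.zero_le (N x)) (Finset.mem_univ j)
    simp only [monDeg] at hdeg
    omega
  · rintro rfl
    obtain ⟨M, hM⟩ := hX.1
    exact ⟨hX.2 M hM _ (fun j => Nat.zero_le _), by simp [monDeg]⟩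

end PP

namespace PP

theorem div_eq_iff' (n k m : ℕ) (h : 0 < k) : n / k = m ↔ (m*k ≤ n ∧ n < (m+1)*k) := by
  constructor
  · rintro rfl
    refine ⟨Nat.div_mul_le_self n k, ?_⟩
    have h1 := Nat.div_add_mod n k
    have h2 := Nat.mod_lt n h
    calc n = k*(n/k) + n%k := by omega
      _ < k*(n/k) + k := by omega
      _ = (n/k+1)*k := by ring
  · rintro ⟨h1, h2⟩
    exact Nat.div_eq_of_lt_le h1 h2

lemma ncard_maxSet {r : ℕ} (X : Finset (Fin r → ℕ)) :
    {M : Fin r → ℕ | IsMaxMon X M}.ncard = (maxSet X).card := by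
  rw [show {M : Fin r → ℕ | IsMaxMon X M} = ↑(maxSet X) by ext M; simp [mem_maxSet]]
  exact Set.ncard_coe_finset _

def Mk (t e k : ℕ) : Fin (t*e) → ℕ := fun j => if (j:ℕ)/e = k then 1 else 0

def stdX (t e : ℕ) : Finset (Fin (t*e) → ℕ) :=
  (Finset.range t).biUnion (fun k => Finset.Iic (Mk t e k))

variable {t e : ℕ}

lemma mem_stdX {N : Fin (t*e) → ℕ} :
    N ∈ stdX t e ↔ ∃ k, k < t ∧ ∀ j, N j ≤ Mk t e k j := by
  simp [stdX, Finset.mem_biUnion, Finset.mem_Iic, Pi.le_def, Finset.mem_range]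

lemma supp_Mk {k : ℕ} : supp (Mk t e k) = Finset.univ.filter (fun j : Fin (t*e) => (j:ℕ)/e = k) := by
  ext j
  by_cases h : (j:ℕ)/e = k <;> simp [supp, Mk, h]

lemma card_supp_Mk (he : 0 < e) {k : ℕ} (hk : k < t) : (supp (Mk t e k)).card = e := by
  have hsub : ∀ m ∈ Finset.Ico (k*e) ((k+1)*e), m < t*e := by
    intro m hm
    simp only [Finset.mem_Ico] at hm
    have : (k+1)*e ≤ t*e := Nat.mul_le_mul_right e hk
    omega
  rw [supp_Mk]
  have : (Finset.univ.filter (fun j : Fin (t*e) => (j:ℕ)/e = k)).card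
      = (Finset.Ico (k*e) ((k+1)*e)).card := by
    refine Finset.card_bij' (fun j _ => ((j:ℕ) : ℕ)) (fun m hm => (⟨m, hsub m hm⟩ : Fin (t*e))) ?_ ?_ ?_ ?_
    · intro j hj
      simp only [Finset.mem_filter, Finset.mem_univ, true_and] at hj
      rw [Finset.mem_Ico]
      have := (div_eq_iff' (j:ℕ) e k he).1 hj
      omega
    · intro m hm
      simp only [Finset.mem_filter, Finset.mem_univ, true_and]
      rw [Finset.mem_Ico] at hm
      exact (div_eq_iff' m e k he).2 ⟨hm.1, hm.2⟩
    · intro j hj; rfl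
    · intro m hm; rfl
  rw [this, Nat.card_Ico]
  rw [Nat.succ_mul]
  omega

lemma monDeg_Mk (he : 0 < e) {k : ℕ} (hk : k < t) : monDeg (Mk t e k) = e := by
  have : monDeg (Mk t e k) = (supp (Mk t e k)).card := by
    rw [supp_Mk, Finset.card_filter]
    simp [monDeg, Mk]
  rw [this, card_supp_Mk he hk]

lemma Mk_self (he : 0 < e) {k : ℕ} (hk : k < t) :
    Mk t e k ⟨k*e, mul_lt_mul_of_pos_right hk he⟩ = 1 := by
  simp [Mk, Nat.mul_div_cancel _ he]

lemma Mk_ne_self (he : 0 < e) {k k' : ℕ} (hk : k < t) (hne : k' ≠ k) :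
    Mk t e k' ⟨k*e, mul_lt_mul_of_pos_right hk he⟩ = 0 := by
  simp only [Mk, Nat.mul_div_cancel _ he]
  rw [if_neg (fun h => hne h.symm)]

lemma isMaxMon_Mk (he : 0 < e) {k : ℕ} (hk : k < t) : IsMaxMon (stdX t e) (Mk t e k) := by
  refine ⟨mem_stdX.2 ⟨k, hk, fun j => le_refl _⟩, ?_⟩
  intro N hN hle
  obtain ⟨k', hk', hle'⟩ := mem_stdX.1 hN
  have hkk : k' = k := by
    by_contra hne
    have h1 := hle ⟨k*e, mul_lt_mul_of_pos_right hk he⟩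
    have h2 := hle' ⟨k*e, mul_lt_mul_of_pos_right hk he⟩
    rw [Mk_self he hk] at h1
    rw [Mk_ne_self he hk hne] at h2
    omega
  subst hkk
  exact funext fun j => le_antisymm (hle' j) (hle j)

lemma maxSet_stdX (he : 0 < e) : maxSet (stdX t e) = (Finset.range t).image (Mk t e) := by
  ext M
  rw [mem_maxSet]
  simp only [Finset.mem_image, Finset.mem_range]
  constructor
  · rintro ⟨hM, hmax⟩
    obtain ⟨k, hk, hle⟩ := mem_stdX.1 hM
    refine ⟨k, hk, hmax (Mk t e k) (mem_stdX.2 ⟨k, hk, fun j => le_refl _⟩) hle⟩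
  · rintro ⟨k, hk, rfl⟩
    exact isMaxMon_Mk he hk

lemma Mk_injOn (he : 0 < e) : Set.InjOn (Mk t e) (Finset.range t) := by
  intro k hk k' hk' hMk
  simp only [Finset.coe_range, Set.mem_Iio] at hk hk'
  by_contra hne
  have h1 := congrFun hMk ⟨k*e, mul_lt_mul_of_pos_right hk he⟩
  rw [Mk_self he hk, Mk_ne_self he hk (Ne.symm hne)] at h1
  omega

lemma card_maxSet_stdX (he : 0 < e) : (maxSet (stdX t e)).card = t := by
  rw [maxSet_stdX he, Finset.card_image_of_injOn (Mk_injOn he), Finset.card_range]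

lemma isPure_stdX (ht : 0 < t) (he : 0 < e) : IsPureWithSocle (stdX t e) e := by
  have hOI : IsOrderIdeal (stdX t e) := by
    constructor
    · exact ⟨Mk t e 0, mem_stdX.2 ⟨0, ht, fun j => le_refl _⟩⟩
    · intro M hM N hle
      obtain ⟨k, hk, hle'⟩ := mem_stdX.1 hM
      exact mem_stdX.2 ⟨k, hk, fun j => (hle j).trans (hle' j)⟩
  refine ⟨hOI, ?_, ⟨Mk t e 0, mem_stdX.2 ⟨0, ht, fun j => le_refl _⟩, monDeg_Mk he ht⟩, ?_⟩
  · intro M hM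
    obtain ⟨k, hk, hle⟩ := mem_stdX.1 hM
    calc monDeg M ≤ monDeg (Mk t e k) := Finset.sum_le_sum (fun j _ => hle j)
      _ = e := monDeg_Mk he hk
  · intro M hM
    have hMmem : M ∈ maxSet (stdX t e) := mem_maxSet.2 hM
    rw [maxSet_stdX he] at hMmem
    simp only [Finset.mem_image, Finset.mem_range] at hMmem
    obtain ⟨k, hk, rfl⟩ := hMmem
    exact monDeg_Mk he hk

lemma card_deg_one_stdX (ht : 0 < t) (he : 0 < e) :
    ((stdX t e).filter (fun M => monDeg M = 1)).card = t * e := by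
  rw [card_deg_one (isPure_stdX ht he).1]
  have : (maxSet (stdX t e)).biUnion supp = Finset.univ := by
    apply Finset.eq_univ_of_forall
    intro j
    rw [Finset.mem_biUnion]
    have hjt : (j:ℕ)/e < t := (Nat.div_lt_iff_lt_mul he).2 j.isLt
    refine ⟨Mk t e ((j:ℕ)/e), ?_, ?_⟩
    · rw [maxSet_stdX he]
      exact Finset.mem_image.2 ⟨(j:ℕ)/e, Finset.mem_range.2 hjt, rfl⟩
    · simp [supp, Mk]
  rw [this]
  simp

end PP

open PP in
/-- For positive integers `r, t, e` with `r > te` there is no pure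
O-sequence of codimension `r`, socle degree `e` and type `t`; and the bound is sharp:
for `r = te` there is exactly one such pure O-sequence. -/
theorem no_pure_of_large_codim_and_sharp (t e : ℕ) (ht : 0 < t) (he : 0 < e) :
    (∀ r : ℕ, t * e < r →
      ¬ ∃ h : ℕ → ℕ, IsPureOSeqOfType h e t ∧ h 1 = r) ∧
    (∃! h : ℕ → ℕ,
      IsPureOSeqOfType h e t ∧ h 1 = t * e ∧ ∀ i, e < i → h i = 0) := by
  have h1e : 1 ≤ e := he
  constructor
  · rintro r' hr' ⟨h, ⟨r, X, hpure, hvec, hn⟩, h1⟩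
    rw [ncard_maxSet] at hn
    have hD1 : (X.filter (fun M => monDeg M = 1)).card ≤ t * e := by
      rw [card_deg_one hpure.1]
      calc ((maxSet X).biUnion supp).card ≤ ∑ M ∈ maxSet X, (supp M).card :=
            Finset.card_biUnion_le
        _ ≤ ∑ _M ∈ maxSet X, e := Finset.sum_le_sum (fun M hM =>
            (card_supp_le M).trans_eq (hpure.2.2.2 M (mem_maxSet.1 hM)))
        _ = t * e := by rw [Finset.sum_const, hn, smul_eq_mul]
    rw [← hvec 1 h1e] at hD1
    omega
  · refine ⟨(fun i => if i = 0 then 1 else if i ≤ e then t * Nat.choose e i else 0),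
      ⟨⟨t*e, stdX t e, isPure_stdX ht he, ?_, ?_⟩, ?_, ?_⟩, ?_⟩
    · intro i hie
      by_cases hi0 : i = 0
      · subst hi0
        simp only [if_pos rfl]
        rw [deg_zero_eq (isPure_stdX ht he).1]
        simp
      · simp only [if_neg hi0, if_pos hie]
        exact (count_eq (isPure_stdX ht he) (card_maxSet_stdX he) he ht
          (card_deg_one_stdX ht he) i (by omega) hie).symm
    · rw [ncard_maxSet, card_maxSet_stdX he]
    · simp [h1e, Nat.choose_one_right]
    · intro i hei
      dsimp only
      rw [if_neg (by omega : ¬ i = 0), if_neg (by omega : ¬ i ≤ e)]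
    · rintro h ⟨⟨r, X, hpure, hvec, hn⟩, h1, htail⟩
      rw [ncard_maxSet] at hn
      funext i
      by_cases hie : i ≤ e
      · by_cases hi0 : i = 0
        · subst hi0
          rw [hvec 0 (Nat.zero_le e), deg_zero_eq hpure.1]
          simp
        · rw [hvec i hie]
          have h1card : (X.filter (fun M => monDeg M = 1)).card = t*e := by
            rw [← hvec 1 h1e, h1]
          rw [count_eq hpure hn he ht h1card i (by omega) hie]
          simp [hi0, hie]
      · rw [htail i (by omega), if_neg (by omega : ¬ i = 0), if_neg hie]
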